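/- Let f : ℝⁿ → ℝ be differentiable with M-Lipschitz gradient on a convex set S containing x, y, and the auxiliary points y^β = x + β(x − y'), y^γ = x + γ(x − y'). Then for the momentum step x⁺ = y^β − α∇f(y^γ), one has f(x⁺) − f(x) ≤ −(1/(2α) − M/2)‖y^β − x⁺‖² − (1/(2α) − |β−γ|M/2)‖x⁺ − x‖² + ((1/(2α) + M/2)β² + |β−γ|M/2)‖x − y'‖². -/

import Mathlib

open intervalIntegral RealInnerProductSpace

section Aux

variable {E : Type*} [NormedAddCommGroup E] [InnerProductSpace ℝ E] [CompleteSpace E]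

lemma grad_inner_eq (f : E → ℝ) (p w : E) :
    ⟪gradient f p, w⟫ = fderiv ℝ f p w := by
  simp [gradient, InnerProductSpace.toDual_symm_apply]

lemma gradient_continuous (f : E → ℝ) (hf : ContDiff ℝ 1 f) :
    Continuous (gradient f) :=
  (InnerProductSpace.toDual ℝ E).symm.continuous.comp
    (hf.continuous_fderiv one_ne_zero)

/-- Two-sided descent lemma for a function with `M`-Lipschitz gradient on a
convex set. -/
lemma descent_abs (f : E → ℝ) (hf : ContDiff ℝ 1 f) (S : Set E) (hS : Convex ℝ S)
    (M : ℝ)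
    (hLip : ∀ u ∈ S, ∀ v ∈ S, ‖gradient f u - gradient f v‖ ≤ M * ‖u - v‖)
    (u v : E) (hu : u ∈ S) (hv : v ∈ S) :
    |f u - f v - ⟪gradient f v, u - v⟫| ≤ M / 2 * ‖u - v‖ ^ 2 := by
  have hdiff := hf.differentiable one_ne_zero
  set c : ℝ → E := fun t => v + t • (u - v) with hc
  have hcS : ∀ t ∈ Set.Icc (0 : ℝ) 1, c t ∈ S := fun t ht =>
    hS.add_smul_sub_mem hv hu ht
  have hccont : Continuous c := by
    simp only [hc]; continuity
  set D : ℝ → ℝ := fun t => ⟪gradient f (c t), u - v⟫ with hD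
  have hderiv : ∀ t : ℝ, HasDerivAt (fun s => f (c s)) (D t) t := by
    intro t
    have h1 : HasDerivAt c (u - v) t := by
      simpa [hc] using ((hasDerivAt_id t).smul_const (u - v)).const_add v
    have h2 : HasFDerivAt f (fderiv ℝ f (c t)) (c t) := (hdiff (c t)).hasFDerivAt
    have h3 := h2.comp_hasDerivAt t h1
    have h4 : D t = fderiv ℝ f (c t) (u - v) := by simp [hD, grad_inner_eq]
    rw [h4]; exact h3
  have hDcont : Continuous D :=
    ((gradient_continuous f hf).comp hccont).inner continuous_const
  have key : f u - f v = ∫ t in (0:ℝ)..1, D t := by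
    rw [intervalIntegral.integral_eq_sub_of_hasDerivAt (fun t _ => hderiv t)
      (hDcont.intervalIntegrable 0 1)]
    simp [hc]
  set C : ℝ := ⟪gradient f v, u - v⟫ with hC
  set K : ℝ := ‖u - v‖ with hK
  have hbound : ∀ t ∈ Set.Icc (0 : ℝ) 1, |D t - C| ≤ M * t * K ^ 2 := by
    intro t ht
    have h1 : D t - C = ⟪gradient f (c t) - gradient f v, u - v⟫ := by
      simp [hD, hC, inner_sub_left]
    have h2 := abs_real_inner_le_norm (gradient f (c t) - gradient f v) (u - v)
    have h3 := hLip _ (hcS t ht) _ hv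
    have h4 : ‖c t - v‖ = t * K := by
      simp [hc, norm_smul, abs_of_nonneg ht.1, hK]
    rw [h1]
    calc |⟪gradient f (c t) - gradient f v, u - v⟫|
        ≤ ‖gradient f (c t) - gradient f v‖ * ‖u - v‖ := h2
      _ ≤ (M * ‖c t - v‖) * K := by
          apply mul_le_mul_of_nonneg_right h3 (norm_nonneg _)
      _ = M * t * K ^ 2 := by rw [h4]; ring
  have hint : f u - f v - C = ∫ t in (0:ℝ)..1, (D t - C) := by
    rw [intervalIntegral.integral_sub (hDcont.intervalIntegrable 0 1)
      intervalIntegrable_const, intervalIntegral.integral_const]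
    rw [key]; simp
  have hMK : ∫ t in (0:ℝ)..1, M * t * K ^ 2 = M / 2 * K ^ 2 := by
    have h : ∀ t : ℝ, M * t * K ^ 2 = (M * K ^ 2) * t := fun t => by ring
    simp_rw [h]
    rw [intervalIntegral.integral_const_mul, integral_id]
    ring
  rw [hint]
  calc |∫ t in (0:ℝ)..1, (D t - C)| ≤ ∫ t in (0:ℝ)..1, |D t - C| := by
        apply intervalIntegral.abs_integral_le_integral_abs zero_le_one
    _ ≤ ∫ t in (0:ℝ)..1, M * t * K ^ 2 := by
        apply intervalIntegral.integral_mono_on zero_le_one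
          ((hDcont.sub continuous_const).abs.intervalIntegrable 0 1)
          ((by continuity : Continuous fun t : ℝ => M * t * K ^ 2).intervalIntegrable 0 1)
          hbound
    _ = M / 2 * K ^ 2 := hMK

end Aux

set_option maxHeartbeats 1000000 in
/-- One-step descent inequality for the momentum method. -/
theorem momentum_descent_inequality {n : ℕ}
    (f : EuclideanSpace ℝ (Fin n) → ℝ) (hf : ContDiff ℝ 1 f)
    (S : Set (EuclideanSpace ℝ (Fin n))) (hS : Convex ℝ S)
    (M α β γ : ℝ) (hM : 0 < M) (hα : 0 < α)
    (hLip : ∀ u ∈ S, ∀ v ∈ S, ‖gradient f u - gradient f v‖ ≤ M * ‖u - v‖)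
    (x y' : EuclideanSpace ℝ (Fin n))
    (hx : x ∈ S)
    (hyβ : x + β • (x - y') ∈ S)
    (hyγ : x + γ • (x - y') ∈ S)
    (hxplus : x + β • (x - y') - α • gradient f (x + γ • (x - y')) ∈ S) :
    f (x + β • (x - y') - α • gradient f (x + γ • (x - y'))) - f x ≤
      -(1 / (2 * α) - M / 2) *
          ‖(x + β • (x - y')) - (x + β • (x - y') - α • gradient f (x + γ • (x - y')))‖ ^ 2
        - (1 / (2 * α) - |β - γ| * M / 2) *
          ‖(x + β • (x - y') - α • gradient f (x + γ • (x - y'))) - x‖ ^ 2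
        + ((1 / (2 * α) + M / 2) * β ^ 2 + |β - γ| * M / 2) * ‖x - y'‖ ^ 2 := by
  set p : EuclideanSpace ℝ (Fin n) := x + β • (x - y') with hp
  set q : EuclideanSpace ℝ (Fin n) := x + γ • (x - y') with hq
  set g : EuclideanSpace ℝ (Fin n) := gradient f q with hg
  set xp : EuclideanSpace ℝ (Fin n) := p - α • g with hxp
  set Gp : EuclideanSpace ℝ (Fin n) := gradient f p with hGp
  set A : ℝ := ‖p - xp‖ with hA
  set B : ℝ := ‖p - x‖ with hB
  set Cc : ℝ := ‖xp - x‖ with hCc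
  set K : ℝ := ‖x - y'‖ with hK
  have habs1 := descent_abs f hf S hS M hLip xp p hxplus hyβ
  have habs2 := descent_abs f hf S hS M hLip x p hx hyβ
  have hnr1 : ‖xp - p‖ = A := norm_sub_rev xp p
  have hnr2 : ‖x - p‖ = B := norm_sub_rev x p
  rw [hnr1] at habs1
  rw [hnr2] at habs2
  have E1 : f xp - f p - ⟪Gp, xp - p⟫ ≤ M / 2 * A ^ 2 :=
    (abs_le.mp habs1).2
  have E2 : -(M / 2 * B ^ 2) ≤ f x - f p - ⟪Gp, x - p⟫ :=
    (abs_le.mp habs2).1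
  have E3 : ⟪Gp, xp - p⟫ - ⟪Gp, x - p⟫ = ⟪g, xp - x⟫ + ⟪Gp - g, xp - x⟫ := by
    rw [← inner_sub_right, inner_sub_left]
    have : xp - p - (x - p) = xp - x := by abel
    rw [this]; ring
  -- polarization
  have E4 : α * ⟪g, xp - x⟫ = (B ^ 2 - A ^ 2 - Cc ^ 2) / 2 := by
    have hd : p - x = (p - xp) + (xp - x) := by abel
    have hpol := @norm_add_sq_real (EuclideanSpace ℝ (Fin n)) _ _ (p - xp) (xp - x)
    rw [← hd] at hpol
    have hsm : p - xp = α • g := by rw [hxp]; abel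
    have hinner : ⟪p - xp, xp - x⟫ = α * ⟪g, xp - x⟫ := by
      rw [hsm, real_inner_smul_left]
    rw [hinner] at hpol
    rw [← hA, ← hB, ← hCc] at hpol
    linarith
  have E5 : ⟪Gp - g, xp - x⟫ ≤ M * (|β - γ| * K) * Cc := by
    have h1 := real_inner_le_norm (Gp - g) (xp - x)
    have h2 := hLip p hyβ q hyγ
    have h3 : ‖p - q‖ = |β - γ| * K := by
      have : p - q = (β - γ) • (x - y') := by
        rw [hp, hq, sub_smul]; abel
      rw [this, norm_smul, Real.norm_eq_abs, hK]
    rw [h3] at h2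
    calc ⟪Gp - g, xp - x⟫ ≤ ‖Gp - g‖ * Cc := h1
      _ ≤ M * (|β - γ| * K) * Cc := by
          apply mul_le_mul_of_nonneg_right h2 (norm_nonneg _)
  have E6 : B ^ 2 = β ^ 2 * K ^ 2 := by
    have : p - x = β • (x - y') := by rw [hp]; abel
    rw [hB, this, norm_smul, Real.norm_eq_abs, hK, mul_pow, sq_abs]
  -- clear the division by introducing r = 1/(2α)
  have hα' : (2 : ℝ) * α > 0 := by linarith
  have E4' : ⟪g, xp - x⟫ = 1 / (2 * α) * (β ^ 2 * K ^ 2 - A ^ 2 - Cc ^ 2) := by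
    rw [div_mul_eq_mul_div, one_mul, eq_div_iff (by positivity : (2 : ℝ) * α ≠ 0)]
    linear_combination (2 : ℝ) * E4 + E6
  have hAMGM : M * (|β - γ| * K) * Cc ≤ |β - γ| * M / 2 * (K ^ 2 + Cc ^ 2) := by
    nlinarith [mul_nonneg hM.le (abs_nonneg (β - γ)), sq_nonneg (K - Cc)]
  rw [E6] at E2
  set r : ℝ := 1 / (2 * α) with hr
  linarith [E1, E2, E3, E4', E5, hAMGM]
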